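/- Let (ν_x, ν_o) be jointly Gaussian with means (μ_x, μ_o) and positive definite covariance [[K_xx, K_xo],[K_xo, K_oo]], σ > 0, and v = K_xx + K_oo − 2K_xo > 0. Then E[ν_x · 1_{ν_x > ν_o + σ}] = μ_x·(1 − Φ((μ_o + σ − μ_x)/√v)) + ((K_xx − K_xo)/√v)·φ((μ_o + σ − μ_x)/√v). -/

import Mathlib

open Real MeasureTheory ProbabilityTheory

open Filter

/-- The standard normal probability density function. -/
noncomputable def stdNormalPDF (x : ℝ) : ℝ := Real.exp (-x ^ 2 / 2) / Real.sqrt (2 * Real.pi)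

/-- The standard normal cumulative distribution function. -/
noncomputable def stdNormalCDF (t : ℝ) : ℝ := ∫ s in Set.Iic t, stdNormalPDF s


lemma sn_pdf_eq : gaussianPDFReal 0 1 = stdNormalPDF := by
  funext x
  simp only [gaussianPDFReal, stdNormalPDF, NNReal.coe_one, mul_one, sub_zero]
  rw [inv_mul_eq_div]

lemma sn_pdf_nonneg (x : ℝ) : 0 ≤ stdNormalPDF x := by
  rw [← sn_pdf_eq]; exact gaussianPDFReal_nonneg 0 1 x

lemma sn_meas (s : Set ℝ) : gaussianReal 0 1 s = ENNReal.ofReal (∫ x in s, stdNormalPDF x) := by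
  rw [gaussianReal_apply_eq_integral 0 one_ne_zero, sn_pdf_eq]

lemma sn_meas_Iic (t : ℝ) : ((gaussianReal 0 1) (Set.Iic t)).toReal = stdNormalCDF t := by
  rw [sn_meas, ENNReal.toReal_ofReal]
  · rfl
  · exact integral_nonneg fun x => sn_pdf_nonneg x

lemma sn_meas_Ioi (t : ℝ) : ((gaussianReal 0 1) (Set.Ioi t)).toReal = 1 - stdNormalCDF t := by
  have h1 : (gaussianReal 0 1) (Set.Ioi t) = 1 - (gaussianReal 0 1) (Set.Iic t) := by
    rw [← Set.compl_Iic]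
    exact prob_compl_eq_one_sub measurableSet_Iic
  rw [h1, ENNReal.toReal_sub_of_le prob_le_one ENNReal.one_ne_top, ENNReal.toReal_one, sn_meas_Iic]

lemma sn_integrable_mul : Integrable (fun x => x * stdNormalPDF x) := by
  have h := (integrable_mul_exp_neg_mul_sq (b := 1/2) (by norm_num)).div_const (Real.sqrt (2 * Real.pi))
  convert h using 2 with x
  simp only [stdNormalPDF]
  ring_nf

lemma sn_hasDeriv (x : ℝ) : HasDerivAt (fun y => -stdNormalPDF y) (x * stdNormalPDF x) x := by
  have h1 : HasDerivAt (fun y : ℝ => -y ^ 2 / 2) (-x) x := by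
    have := ((hasDerivAt_pow 2 x).neg).div_const 2
    refine this.congr_deriv ?_
    ring
  have h2 := (h1.exp).div_const (Real.sqrt (2 * Real.pi))
  have h3 := h2.neg
  refine h3.congr_deriv ?_
  simp only [stdNormalPDF]
  ring

lemma sn_tendsto : Tendsto (fun y => -stdNormalPDF y) atTop (nhds 0) := by
  have h1 : Tendsto (fun y : ℝ => -y ^ 2 / 2) atTop atBot := by
    apply Tendsto.atBot_div_const (by norm_num)
    exact tendsto_neg_atBot_iff.mpr (tendsto_pow_atTop (by norm_num))
  have h2 := (Real.tendsto_exp_atBot.comp h1).div_const (Real.sqrt (2 * Real.pi))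
  have := h2.neg
  simpa [stdNormalPDF, Function.comp] using this

lemma sn_integral_Ioi (t : ℝ) :
    ∫ x in Set.Ioi t, x * stdNormalPDF x = stdNormalPDF t := by
  have := integral_Ioi_of_hasDerivAt_of_tendsto' (f := fun y => -stdNormalPDF y)
    (f' := fun x => x * stdNormalPDF x) (a := t)
    (fun x _ => sn_hasDeriv x) sn_integrable_mul.integrableOn sn_tendsto
  rw [this]; ring

lemma sn_pdf_measurable : Measurable stdNormalPDF := by
  rw [← sn_pdf_eq]; exact measurable_gaussianPDFReal 0 1

lemma Z_density : gaussianReal 0 1 =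
    volume.withDensity (fun x => ((stdNormalPDF x).toNNReal : ENNReal)) := by
  rw [gaussianReal_of_var_ne_zero 0 one_ne_zero]
  congr 1
  funext x
  rw [gaussianPDF, sn_pdf_eq, ENNReal.ofReal]

lemma Z_integrable_iff {g : ℝ → ℝ} (hg : AEStronglyMeasurable g (gaussianReal 0 1)) :
    Integrable g (gaussianReal 0 1) ↔ Integrable (fun x => g x * stdNormalPDF x) volume := by
  rw [Z_density] at hg ⊢
  rw [integrable_withDensity_iff (sn_pdf_measurable.real_toNNReal.coe_nnreal_ennreal) (ae_of_all _ fun x => ENNReal.coe_lt_top)]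
  simp_rw [ENNReal.coe_toReal, Real.coe_toNNReal _ (sn_pdf_nonneg _)]

lemma Z_integrable_id : Integrable (fun x : ℝ => x) (gaussianReal 0 1) := by
  rw [show (fun x : ℝ => x) = id from rfl, Z_integrable_iff aestronglyMeasurable_id]
  simpa using sn_integrable_mul

lemma Z_setIntegral (g : ℝ → ℝ) {s : Set ℝ} (hs : MeasurableSet s) :
    ∫ x in s, g x ∂(gaussianReal 0 1) = ∫ x in s, g x * stdNormalPDF x := by
  rw [Z_density, restrict_withDensity hs, integral_withDensity_eq_integral_smul (sn_pdf_measurable.real_toNNReal)]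
  congr 1
  funext x
  rw [NNReal.smul_def, smul_eq_mul, Real.coe_toNNReal _ (sn_pdf_nonneg _), mul_comm]

lemma Z_setIntegral_id_Ioi (t : ℝ) :
    ∫ x in Set.Ioi t, x ∂(gaussianReal 0 1) = stdNormalPDF t := by
  rw [Z_setIntegral _ measurableSet_Ioi, sn_integral_Ioi]

lemma gauss_map (m : ℝ) {Vr : ℝ} (h : 0 < Vr) :
    gaussianReal m (Real.toNNReal Vr) =
      Measure.map (fun s => Real.sqrt Vr * s + m) (gaussianReal 0 1) := by
  have hcomp : (fun s : ℝ => Real.sqrt Vr * s + m) = (fun x => x + m) ∘ (fun s => Real.sqrt Vr * s) := rfl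
  rw [hcomp, ← Measure.map_map (measurable_id'.add_const m) (measurable_id'.const_mul _),
    gaussianReal_map_const_mul, gaussianReal_map_add_const]
  congr 1
  · ring
  · ext
    simp [Real.sq_sqrt h.le, Real.coe_toNNReal _ h.le]

lemma gauss_preimage (m : ℝ) {Vr : ℝ} (h : 0 < Vr) (t : ℝ) :
    (fun s : ℝ => Real.sqrt Vr * s + m) ⁻¹' Set.Ioi t = Set.Ioi ((t - m) / Real.sqrt Vr) := by
  have hs : 0 < Real.sqrt Vr := Real.sqrt_pos.mpr h
  ext s
  simp only [Set.mem_preimage, Set.mem_Ioi]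
  rw [div_lt_iff₀ hs]
  constructor <;> intro h' <;> nlinarith [hs]

lemma gauss_meas_Ioi (m : ℝ) {Vr : ℝ} (h : 0 < Vr) (t : ℝ) :
    ((gaussianReal m (Real.toNNReal Vr)) (Set.Ioi t)).toReal =
      1 - stdNormalCDF ((t - m) / Real.sqrt Vr) := by
  rw [gauss_map m h, Measure.map_apply (by fun_prop) measurableSet_Ioi, gauss_preimage m h,
    sn_meas_Ioi]

lemma gauss_integrable_id (m : ℝ) {Vr : ℝ} (h : 0 < Vr) :
    Integrable (fun x : ℝ => x) (gaussianReal m (Real.toNNReal Vr)) := by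
  rw [gauss_map m h, show (fun x : ℝ => x) = id from rfl, integrable_map_measure aestronglyMeasurable_id (by fun_prop)]
  exact (Z_integrable_id.const_mul _).add (integrable_const m)

lemma gauss_setIntegral_id_Ioi (m : ℝ) {Vr : ℝ} (h : 0 < Vr) (t : ℝ) :
    ∫ x in Set.Ioi t, x ∂(gaussianReal m (Real.toNNReal Vr)) =
      m * (1 - stdNormalCDF ((t - m) / Real.sqrt Vr)) +
        Real.sqrt Vr * stdNormalPDF ((t - m) / Real.sqrt Vr) := by
  rw [gauss_map m h, show (fun x : ℝ => x) = id from rfl, setIntegral_map measurableSet_Ioi aestronglyMeasurable_id (by fun_prop),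
    gauss_preimage m h]
  have h1 : ∫ s in Set.Ioi ((t - m) / Real.sqrt Vr), (Real.sqrt Vr * s + m) ∂(gaussianReal 0 1)
      = Real.sqrt Vr * (∫ s in Set.Ioi ((t - m) / Real.sqrt Vr), s ∂(gaussianReal 0 1))
        + m * (((gaussianReal 0 1) (Set.Ioi ((t - m) / Real.sqrt Vr))).toReal) := by
    rw [integral_add ((Z_integrable_id.const_mul _).integrableOn) (integrableOn_const (measure_ne_top _ _)),
      integral_const_mul, setIntegral_const, smul_eq_mul, measureReal_def]
    ring
  simp only [id]
  rw [h1, Z_setIntegral_id_Ioi, sn_meas_Ioi]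
  ring

lemma my_add_const {Ω : Type*} [MeasurableSpace Ω] {P : Measure Ω} {X : Ω → ℝ} {m : ℝ}
    {w : NNReal} (hX : Measure.map X P = gaussianReal m w) (e : ℝ) :
    Measure.map (fun ω => X ω + e) P = gaussianReal (m + e) w := by
  have hXm : AEMeasurable X P := aemeasurable_of_map_neZero (by rw [hX]; infer_instance)
  change Measure.map ((fun x => x + e) ∘ X) P = _
  rw [← AEMeasurable.map_map_of_aemeasurable (measurable_id'.add_const _).aemeasurable hXm, hX,
    gaussianReal_map_add_const]

theorem main_aux {Ω : Type*} [MeasurableSpace Ω] (P : Measure Ω) [IsProbabilityMeasure P]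
    (νx νo : Ω → ℝ) (μx μo Kxx Kxo Koo σ : ℝ)
    (hmx : Measurable νx) (hmo : Measurable νo) (hKxx : 0 < Kxx)
    (hσ : 0 < σ) (hv : 0 < Kxx + Koo - 2 * Kxo)
    (hjoint : ∀ a b : ℝ,
      Measure.map (fun ω => a * νx ω + b * νo ω) P =
        gaussianReal (a * μx + b * μo)
          (Real.toNNReal (a ^ 2 * Kxx + 2 * a * b * Kxo + b ^ 2 * Koo))) :
    ∫ ω in {ω | νx ω > νo ω + σ}, νx ω ∂P =
      μx * (1 - stdNormalCDF ((μo + σ - μx) / Real.sqrt (Kxx + Koo - 2 * Kxo))) +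
        ((Kxx - Kxo) / Real.sqrt (Kxx + Koo - 2 * Kxo)) *
          stdNormalPDF ((μo + σ - μx) / Real.sqrt (Kxx + Koo - 2 * Kxo)) := by
  set v : ℝ := Kxx + Koo - 2 * Kxo with hvdef
  set c : ℝ := (Kxx - Kxo) / v with hcdef
  have hcv : c * v = Kxx - Kxo := div_mul_cancel₀ _ hv.ne'
  set μD : ℝ := μx - μo with hμDdef
  set D : Ω → ℝ := fun ω => νx ω - νo ω with hDdef
  have hmD : Measurable D := hmx.sub hmo
  set α : ℝ := (σ - μD) / Real.sqrt v with hαdef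
  have hαeq : α = (μo + σ - μx) / Real.sqrt v := by rw [hαdef, hμDdef]; ring
  -- law of D
  have hD : Measure.map D P = gaussianReal μD (Real.toNNReal v) := by
    have h := hjoint 1 (-1)
    have h1 : (fun ω => 1 * νx ω + (-1) * νo ω) = D := by funext ω; simp [hDdef]; ring
    have h2 : 1 * μx + (-1) * μo = μD := by ring
    have h3 : (1:ℝ) ^ 2 * Kxx + 2 * 1 * (-1) * Kxo + (-1) ^ 2 * Koo = v := by ring
    rwa [h1, h2, h3] at h
  -- the event
  have hSeq : {ω | νx ω > νo ω + σ} = D ⁻¹' Set.Ioi σ := by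
    ext ω; simp only [Set.mem_setOf_eq, Set.mem_preimage, Set.mem_Ioi, hDdef]
    constructor <;> intro h <;> linarith
  have hmeasS : MeasurableSet {ω | νx ω > νo ω + σ} := by
    rw [hSeq]; exact hmD measurableSet_Ioi
  -- basic transfers
  have hPS : (P {ω | νx ω > νo ω + σ}).toReal = 1 - stdNormalCDF α := by
    rw [hSeq, ← Measure.map_apply hmD measurableSet_Ioi, hD, gauss_meas_Ioi μD hv σ, hαdef]
  have hIntD : Integrable D P := by
    have h := (integrable_map_measure aestronglyMeasurable_id hmD.aemeasurable).mp
      (by rw [hD]; exact (gauss_integrable_id μD hv))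
    simpa using h
  have hIntνx : Integrable νx P := by
    have hlawx : Measure.map νx P = gaussianReal μx (Real.toNNReal Kxx) := by
      have h := hjoint 1 0
      have h1 : (fun ω => 1 * νx ω + 0 * νo ω) = νx := by funext ω; ring
      have h2 : 1 * μx + 0 * μo = μx := by ring
      have h3 : (1:ℝ) ^ 2 * Kxx + 2 * 1 * 0 * Kxo + 0 ^ 2 * Koo = Kxx := by ring
      rwa [h1, h2, h3] at h
    have h := (integrable_map_measure aestronglyMeasurable_id hmx.aemeasurable).mp
      (by rw [hlawx]; exact (gauss_integrable_id μx hKxx))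
    simpa using h
  have hSintD : ∫ ω in {ω | νx ω > νo ω + σ}, D ω ∂P =
      μD * (1 - stdNormalCDF α) + Real.sqrt v * stdNormalPDF α := by
    rw [hSeq]
    calc ∫ ω in D ⁻¹' Set.Ioi σ, D ω ∂P
        = ∫ y in Set.Ioi σ, y ∂(Measure.map D P) :=
          (setIntegral_map measurableSet_Ioi aestronglyMeasurable_id hmD.aemeasurable).symm
      _ = μD * (1 - stdNormalCDF α) + Real.sqrt v * stdNormalPDF α := by
          rw [hD]; simpa using gauss_setIntegral_id_Ioi μD hv σ
  -- residual
  set R₀ : Ω → ℝ := fun ω => νx ω - c * D ω - (μx - c * μD) with hR₀def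
  have hmR₀ : Measurable R₀ := (hmx.sub (hmD.const_mul c)).sub measurable_const
  have hIntR₀ : Integrable R₀ P := (hIntνx.sub (hIntD.const_mul c)).sub (integrable_const _)
  have hcv2 : c * (Kxx + Koo - 2 * Kxo) = Kxx - Kxo := by rw [← hvdef]; exact hcv
  -- law of t * R₀ + D
  have hlaw : ∀ t : ℝ, Measure.map (fun ω => t * R₀ ω + D ω) P =
      gaussianReal μD (Real.toNNReal ((1 + t*(1-c))^2 * Kxx
        + 2*(1 + t*(1-c))*(t*c - 1) * Kxo + (t*c - 1)^2 * Koo)) := by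
    intro t
    have h0 := hjoint (1 + t*(1-c)) (t*c - 1)
    have h1 := my_add_const h0 (-(t * (μx - c * μD)))
    have h2 : (fun ω => ((1 + t*(1-c)) * νx ω + (t*c - 1) * νo ω) + (-(t * (μx - c * μD))))
        = fun ω => t * R₀ ω + D ω := by
      funext ω; simp only [hR₀def, hDdef]; ring
    have h3 : ((1 + t*(1-c)) * μx + (t*c - 1) * μo) + (-(t * (μx - c * μD))) = μD := by
      simp only [hμDdef]; ring
    rwa [h2, h3] at h1
  have hVeven : ∀ t : ℝ, ((1 + (-t)*(1-c))^2 * Kxx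
        + 2*(1 + (-t)*(1-c))*((-t)*c - 1) * Kxo + ((-t)*c - 1)^2 * Koo)
      = ((1 + t*(1-c))^2 * Kxx + 2*(1 + t*(1-c))*(t*c - 1) * Kxo + (t*c - 1)^2 * Koo) := by
    intro t
    linear_combination (4*t) * hcv2
  -- the even function k
  set g : ℝ → ℝ := fun x => max (x - σ) 0 with hgdef
  have hgcont : Continuous g := (continuous_id.sub continuous_const).max continuous_const
  set k : ℝ → ℝ := fun t => ∫ ω, g (t * R₀ ω + D ω) ∂P with hkdef
  have hkmap : ∀ t, k t = ∫ x, g x ∂(Measure.map (fun ω => t * R₀ ω + D ω) P) := by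
    intro t
    rw [integral_map (φ := fun ω => t * R₀ ω + D ω) ((hmR₀.const_mul t).add hmD).aemeasurable hgcont.aestronglyMeasurable]
  have hkeven : ∀ t, k (-t) = k t := by
    intro t; rw [hkmap, hkmap, hlaw, hlaw, hVeven]
  -- a.e. D ≠ σ
  have hvne : Real.toNNReal v ≠ 0 := by
    simp only [ne_eq, Real.toNNReal_eq_zero, not_le]; exact hv
  have haeD : ∀ᵐ ω ∂P, D ω ≠ σ := by
    have h0 : P (D ⁻¹' {σ}) = 0 := by
      rw [← Measure.map_apply hmD (measurableSet_singleton σ), hD]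
      exact gaussianReal_absolutelyContinuous μD hvne Real.volume_singleton
    have hset : {ω | ¬ D ω ≠ σ} = D ⁻¹' {σ} := by ext ω; simp
    rw [ae_iff, hset]; exact h0
  -- dominated-convergence derivative
  have hF_int : Integrable (fun ω => g (0 * R₀ ω + D ω)) P := by
    have h1 : Integrable (fun ω => g (D ω)) P := by
      refine (hIntD.sub (integrable_const σ)).abs.mono'
        ((hgcont.measurable.comp hmD).aestronglyMeasurable) (ae_of_all _ fun ω => ?_)
      simp only [hgdef, Real.norm_eq_abs]
      rw [abs_of_nonneg (le_max_right _ _)]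
      exact max_le (le_abs_self _) (abs_nonneg _)
    simpa using h1
  have hdct := hasDerivAt_integral_of_dominated_loc_of_lip (μ := P) (x₀ := 0)
    (F := fun t ω => g (t * R₀ ω + D ω)) (F' := Set.indicator {ω | νx ω > νo ω + σ} R₀)
    (bound := fun ω => |R₀ ω|) (Metric.ball_mem_nhds 0 one_pos)
    (Eventually.of_forall fun t =>
      (hgcont.measurable.comp ((hmR₀.const_mul t).add hmD)).aestronglyMeasurable)
    hF_int
    (hmR₀.indicator hmeasS).aestronglyMeasurable
    (ae_of_all _ fun ω => by
      refine LipschitzWith.lipschitzOnWith (LipschitzWith.of_dist_le_mul fun t s => ?_)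
      rw [Real.dist_eq, Real.dist_eq]
      have h1 : |g (t * R₀ ω + D ω) - g (s * R₀ ω + D ω)|
          ≤ |(t * R₀ ω + D ω - σ) - (s * R₀ ω + D ω - σ)| := by
        simp only [hgdef]
        exact abs_max_sub_max_le_abs _ _ _
      have h2 : (t * R₀ ω + D ω - σ) - (s * R₀ ω + D ω - σ) = R₀ ω * (t - s) := by ring
      rw [h2, abs_mul] at h1
      calc |g (t * R₀ ω + D ω) - g (s * R₀ ω + D ω)| ≤ |R₀ ω| * |t - s| := h1
        _ = ↑(Real.nnabs (|R₀ ω|)) * |t - s| := by rw [Real.coe_nnabs, abs_abs]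
    )
    hIntR₀.abs
    (haeD.mono fun ω hω => by
      rcases lt_or_gt_of_ne hω with hlt | hgt
      · have hnot : ω ∉ {ω | νx ω > νo ω + σ} := by
          simp only [Set.mem_setOf_eq, not_lt]
          simp only [hDdef] at hlt; linarith
        rw [Set.indicator_of_notMem hnot]
        have hct : ContinuousAt (fun t : ℝ => t * R₀ ω + D ω - σ) 0 := by fun_prop
        have h0 : 0 * R₀ ω + D ω - σ < 0 := by simp; linarith
        have hev := hct.eventually (eventually_lt_nhds h0)
        refine HasDerivAt.congr_of_eventuallyEq (hasDerivAt_const 0 0)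
          (hev.mono fun t ht => ?_)
        simp only [hgdef]
        exact max_eq_right ht.le
      · have hmem : ω ∈ {ω | νx ω > νo ω + σ} := by
          simp only [Set.mem_setOf_eq]
          simp only [hDdef] at hgt; linarith
        rw [Set.indicator_of_mem hmem]
        have hct : ContinuousAt (fun t : ℝ => t * R₀ ω + D ω - σ) 0 := by fun_prop
        have h0 : 0 < 0 * R₀ ω + D ω - σ := by simp; linarith
        have hev := hct.eventually (eventually_gt_nhds h0)
        refine HasDerivAt.congr_of_eventuallyEq
          (((hasDerivAt_mul_const (R₀ ω)).add_const (D ω)).sub_const σ)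
          (hev.mono fun t ht => ?_)
        simp only [hgdef]
        exact max_eq_left ht.le
    )
  obtain ⟨hIntF', hderiv⟩ := hdct
  have hderivk : HasDerivAt k (∫ ω, Set.indicator {ω | νx ω > νo ω + σ} R₀ ω ∂P) 0 := hderiv
  -- even function has zero derivative at 0
  have hintzero : ∫ ω, Set.indicator {ω | νx ω > νo ω + σ} R₀ ω ∂P = 0 := by
    set d : ℝ := ∫ ω, Set.indicator {ω | νx ω > νo ω + σ} R₀ ω ∂P with hddef
    have hneg : HasDerivAt (fun t : ℝ => -t) (-1 : ℝ) (0 : ℝ) := hasDerivAt_neg 0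
    have hk0 : HasDerivAt k d (-(0:ℝ)) := by rw [neg_zero]; exact hderivk
    have hcomp : HasDerivAt (k ∘ fun t : ℝ => -t) (d * (-1)) 0 := HasDerivAt.comp 0 hk0 hneg
    have hfun : (k ∘ fun t : ℝ => -t) = k := funext fun t => hkeven t
    rw [hfun] at hcomp
    have := hcomp.unique hderivk
    linarith
  have hSint0 : ∫ ω in {ω | νx ω > νo ω + σ}, R₀ ω ∂P = 0 := by
    rw [← integral_indicator hmeasS]; exact hintzero
  -- final assembly
  have h1 : ∀ ω, νx ω = c * D ω + (R₀ ω + (μx - c * μD)) := fun ω => by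
    simp only [hR₀def]; ring
  have hsplit : ∫ ω in {ω | νx ω > νo ω + σ}, νx ω ∂P
      = c * (∫ ω in {ω | νx ω > νo ω + σ}, D ω ∂P)
        + ((∫ ω in {ω | νx ω > νo ω + σ}, R₀ ω ∂P)
          + (μx - c * μD) * (P {ω | νx ω > νo ω + σ}).toReal) := by
    calc ∫ ω in {ω | νx ω > νo ω + σ}, νx ω ∂P
        = ∫ ω in {ω | νx ω > νo ω + σ}, (c * D ω + (R₀ ω + (μx - c * μD))) ∂P := by
          exact integral_congr_ae (ae_of_all _ fun ω => h1 ω)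
      _ = _ := by
          have hA : IntegrableOn (fun ω => c * D ω) {ω | νx ω > νo ω + σ} P :=
            (hIntD.const_mul c).integrableOn
          have hB : IntegrableOn (fun ω => R₀ ω + (μx - c * μD)) {ω | νx ω > νo ω + σ} P :=
            (hIntR₀.add (integrable_const _)).integrableOn
          have hC : IntegrableOn (fun _ : Ω => μx - c * μD) {ω | νx ω > νo ω + σ} P :=
            (integrable_const _).integrableOn
          rw [integral_add hA hB, integral_add hIntR₀.integrableOn hC,
            integral_const_mul, setIntegral_const, smul_eq_mul, measureReal_def]
          ring
  rw [hsplit, hSintD, hSint0, hPS, ← hαeq]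
  have hsqv : Real.sqrt v * Real.sqrt v = v := Real.mul_self_sqrt hv.le
  have hsne : Real.sqrt v ≠ 0 := (Real.sqrt_pos.mpr hv).ne'
  have hc2 : c * Real.sqrt v = (Kxx - Kxo) / Real.sqrt v := by
    rw [eq_div_iff hsne, mul_assoc, hsqv]; exact hcv
  simp only [hμDdef]
  linear_combination (stdNormalPDF α) * hc2

/-- `(νx, νo)` jointly Gaussian with means `(μx, μo)`, positive definite covariance
`[[Kxx, Kxo],[Kxo, Koo]]` (encoded by the law of every linear combination),
`σ > 0` and `v = Kxx + Koo − 2Kxo > 0`. Then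
`E[νx · 1_{νx > νo + σ}] = μx (1 − Φ((μo + σ − μx)/√v)) + ((Kxx − Kxo)/√v) φ((μo + σ − μx)/√v)`. -/
theorem stmt9 {Ω : Type*} [MeasurableSpace Ω] (P : Measure Ω) [IsProbabilityMeasure P]
    (νx νo : Ω → ℝ) (μx μo Kxx Kxo Koo σ : ℝ)
    (hKxx : 0 < Kxx) (hKoo : 0 < Koo) (hpd : Kxo ^ 2 < Kxx * Koo)
    (hσ : 0 < σ) (hv : 0 < Kxx + Koo - 2 * Kxo)
    (hjoint : ∀ a b : ℝ,
      Measure.map (fun ω => a * νx ω + b * νo ω) P =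
        gaussianReal (a * μx + b * μo)
          (Real.toNNReal (a ^ 2 * Kxx + 2 * a * b * Kxo + b ^ 2 * Koo))) :
    ∫ ω in {ω | νx ω > νo ω + σ}, νx ω ∂P =
      μx * (1 - stdNormalCDF ((μo + σ - μx) / Real.sqrt (Kxx + Koo - 2 * Kxo))) +
        ((Kxx - Kxo) / Real.sqrt (Kxx + Koo - 2 * Kxo)) *
          stdNormalPDF ((μo + σ - μx) / Real.sqrt (Kxx + Koo - 2 * Kxo)) := by
  have hνx : AEMeasurable νx P := by
    have h1 := hjoint 1 0
    have e1 : (fun ω => 1 * νx ω + 0 * νo ω) = νx := by funext ω; ring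
    rw [e1] at h1
    exact aemeasurable_of_map_neZero (by rw [h1]; infer_instance)
  have hνo : AEMeasurable νo P := by
    have h1 := hjoint 0 1
    have e1 : (fun ω => 0 * νx ω + 1 * νo ω) = νo := by funext ω; ring
    rw [e1] at h1
    exact aemeasurable_of_map_neZero (by rw [h1]; infer_instance)
  set νx' := hνx.mk νx with hx'def
  set νo' := hνo.mk νo with ho'def
  have hx : νx =ᵐ[P] νx' := hνx.ae_eq_mk
  have ho : νo =ᵐ[P] νo' := hνo.ae_eq_mk
  have hjoint' : ∀ a b : ℝ,
      Measure.map (fun ω => a * νx' ω + b * νo' ω) P =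
        gaussianReal (a * μx + b * μo)
          (Real.toNNReal (a ^ 2 * Kxx + 2 * a * b * Kxo + b ^ 2 * Koo)) := by
    intro a b
    rw [← hjoint a b]
    apply Measure.map_congr
    filter_upwards [hx, ho] with ω h1 h2
    rw [h1, h2]
  have hmain := main_aux P νx' νo' μx μo Kxx Kxo Koo σ hνx.measurable_mk hνo.measurable_mk
    hKxx hσ hv hjoint'
  rw [← hmain]
  have hset : {ω | νx ω > νo ω + σ} =ᵐ[P] {ω | νx' ω > νo' ω + σ} := by
    rw [Filter.eventuallyEq_set]
    filter_upwards [hx, ho] with ω h1 h2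
    simp only [Set.mem_setOf_eq, h1, h2]
  calc ∫ ω in {ω | νx ω > νo ω + σ}, νx ω ∂P
      = ∫ ω in {ω | νx ω > νo ω + σ}, νx' ω ∂P :=
        integral_congr_ae (ae_restrict_of_ae hx)
    _ = ∫ ω in {ω | νx' ω > νo' ω + σ}, νx' ω ∂P := setIntegral_congr_set hset
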